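/- Let ℓ ≥ 1 and 0 ≤ r ≤ ℓ, let X_r ⊆ ℂ^{ℓ×ℓ} be the set of matrices of rank at most r, and let W ⊆ ℂ^{ℓ×ℓ} be a (complex linear) subspace with W ∩ X_r = {0}. Then there exists a constant D < 1 such that |⟨A,B⟩| ≤ D·‖A‖·‖B‖ for all A ∈ X_r and B ∈ W, where ⟨A,B⟩ = trace(AB*) and ‖·‖ is the Frobenius norm. -/

import Mathlib

open Matrix
open scoped ComplexOrder

/-- Frobenius norm of a real matrix: `‖A‖ = √(trace (A Aᵀ))`. -/
noncomputable def frobR {n l : ℕ} (A : Matrix (Fin n) (Fin l) ℝ) : ℝ :=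
  Real.sqrt (Matrix.trace (A * Aᵀ))

/-- Frobenius norm of a complex matrix: `‖A‖ = √(trace (A Aᴴ))`. -/
noncomputable def frobC {n l : ℕ} (A : Matrix (Fin n) (Fin l) ℂ) : ℝ :=
  Real.sqrt (Matrix.trace (A * Aᴴ)).re

open Classical in
/-- The unique positive semidefinite square root of a positive semidefinite real
symmetric matrix (junk value `0` if `M` is not positive semidefinite). -/
noncomputable def matSqrtR {k : ℕ} (M : Matrix (Fin k) (Fin k) ℝ) : Matrix (Fin k) (Fin k) ℝ :=
  if h : M.PosSemidef then
    (h.1.eigenvectorUnitary : Matrix (Fin k) (Fin k) ℝ) *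
      Matrix.diagonal ((↑) ∘ Real.sqrt ∘ h.1.eigenvalues) *
      (star h.1.eigenvectorUnitary : Matrix (Fin k) (Fin k) ℝ)
  else 0

open Classical in
/-- The unique positive semidefinite square root of a positive semidefinite hermitian
matrix (junk value `0` if `M` is not positive semidefinite). -/
noncomputable def matSqrtC {k : ℕ} (M : Matrix (Fin k) (Fin k) ℂ) : Matrix (Fin k) (Fin k) ℂ :=
  if h : M.PosSemidef then
    (h.1.eigenvectorUnitary : Matrix (Fin k) (Fin k) ℂ) *
      Matrix.diagonal ((↑) ∘ Real.sqrt ∘ h.1.eigenvalues) *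
      (star h.1.eigenvectorUnitary : Matrix (Fin k) (Fin k) ℂ)
  else 0

/-- Orbit distance for the orthogonal group `O(n)` acting by left multiplication. -/
noncomputable def dO {n l : ℕ} (A B : Matrix (Fin n) (Fin l) ℝ) : ℝ :=
  sInf {x | ∃ W ∈ Matrix.orthogonalGroup (Fin n) ℝ, x = frobR (W * A - B)}

/-- Orbit distance for the unitary group `U(n)` acting by left multiplication. -/
noncomputable def dU {n l : ℕ} (A B : Matrix (Fin n) (Fin l) ℂ) : ℝ :=
  sInf {x | ∃ W ∈ Matrix.unitaryGroup (Fin n) ℂ, x = frobC (W * A - B)}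

/-- `q𝟙ᵀ` : the `n × l` matrix each of whose columns equals `q` (real case). -/
def colMatR {n l : ℕ} (q : Fin n → ℝ) : Matrix (Fin n) (Fin l) ℝ :=
  Matrix.of fun i _ => q i

/-- `q𝟙ᵀ` : the `n × l` matrix each of whose columns equals `q` (complex case). -/
def colMatC {n l : ℕ} (q : Fin n → ℂ) : Matrix (Fin n) (Fin l) ℂ :=
  Matrix.of fun i _ => q i

/-- Orbit distance for the euclidean group `E(n) = O(n) ⋉ ℝⁿ` acting columnwise. -/
noncomputable def dE {n l : ℕ} (A B : Matrix (Fin n) (Fin l) ℝ) : ℝ :=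
  sInf {x | ∃ P ∈ Matrix.orthogonalGroup (Fin n) ℝ, ∃ q : Fin n → ℝ,
    x = frobR (P * A + colMatR q - B)}

/-- Orbit distance for the complex euclidean group `F(n) = U(n) ⋉ ℂⁿ` acting columnwise. -/
noncomputable def dF {n l : ℕ} (A B : Matrix (Fin n) (Fin l) ℂ) : ℝ :=
  sInf {x | ∃ P ∈ Matrix.unitaryGroup (Fin n) ℂ, ∃ q : Fin n → ℂ,
    x = frobC (P * A + colMatC q - B)}

/-- Column-centering `π` : subtract from each column the average of all columns (real case). -/
noncomputable def centerR {n l : ℕ} (A : Matrix (Fin n) (Fin l) ℝ) : Matrix (Fin n) (Fin l) ℝ :=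
  Matrix.of fun i j => A i j - (∑ k, A i k) / (l : ℝ)

/-- Column-centering `π_ℂ` : subtract from each column the average of all columns (complex case). -/
noncomputable def centerC {n l : ℕ} (A : Matrix (Fin n) (Fin l) ℂ) : Matrix (Fin n) (Fin l) ℂ :=
  Matrix.of fun i j => A i j - (∑ k, A i k) / (l : ℂ)

namespace Stmt15Aux

variable {m n : Type*} [Fintype m] [Fintype n]

/-- Matrices as Euclidean space. -/
noncomputable def matL (m n : Type*) [Fintype m] [Fintype n] :
    Matrix m n ℂ ≃ₗ[ℂ] EuclideanSpace ℂ (m × n) where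
  toFun A := (WithLp.equiv 2 _).symm fun p => A p.1 p.2
  invFun x := Matrix.of fun i j => x (i, j)
  map_add' A B := rfl
  map_smul' c A := rfl
  left_inv A := rfl
  right_inv x := rfl

@[simp] lemma matL_apply (A : Matrix m n ℂ) (p : m × n) : matL m n A p = A p.1 p.2 := rfl
@[simp] lemma matL_symm_apply (x : EuclideanSpace ℂ (m × n)) (i : m) (j : n) :
    (matL m n).symm x i j = x (i, j) := rfl

lemma norm_sq_eucl {ι : Type*} [Fintype ι] (x : EuclideanSpace ℂ ι) :
    ‖x‖ ^ 2 = ∑ i, ‖x i‖ ^ 2 := by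
  rw [EuclideanSpace.norm_eq, Real.sq_sqrt]
  positivity

lemma norm_matL_sq (A : Matrix m n ℂ) :
    ‖matL m n A‖ ^ 2 = ∑ i, ∑ j, ‖A i j‖ ^ 2 := by
  rw [norm_sq_eucl]
  rw [Fintype.sum_prod_type]
  rfl

lemma inner_matL (A B : Matrix m n ℂ) :
    (inner ℂ (matL m n B) (matL m n A) : ℂ) = Matrix.trace (A * Bᴴ) := by
  rw [PiLp.inner_apply, Fintype.sum_prod_type]
  simp only [Matrix.trace, Matrix.diag, Matrix.mul_apply, Matrix.conjTranspose_apply]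
  refine Finset.sum_congr rfl fun i _ => Finset.sum_congr rfl fun j _ => ?_
  simp [RCLike.inner_apply, mul_comm]

lemma frobC_eq {n l : ℕ} (A : Matrix (Fin n) (Fin l) ℂ) : frobC A = ‖matL _ _ A‖ := by
  rw [frobC, ← inner_matL A A, norm_eq_sqrt_re_inner (𝕜 := ℂ)]; rfl


lemma sum_fin_pad {β : Type*} [AddCommMonoid β] {s r : ℕ} (hsr : s ≤ r) (g : Fin s → β) :
    ∑ k : Fin r, (if h : (k : ℕ) < s then g ⟨k, h⟩ else 0) = ∑ m : Fin s, g m := by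
  rw [← Finset.sum_subset (Finset.subset_univ
    ((Finset.univ : Finset (Fin s)).map (Fin.castLEEmb hsr)))]
  · rw [Finset.sum_map]
    refine Finset.sum_congr rfl fun m _ => ?_
    rw [dif_pos (by simpa using m.isLt)]
    exact congrArg g (Fin.ext (by simp))
  · intro k _ hk
    rw [dif_neg]
    intro hks
    refine hk ?_
    simp only [Finset.mem_map, Finset.mem_univ, true_and]
    exact ⟨⟨k, hks⟩, by ext; simp⟩

lemma factor {l : ℕ} (r : ℕ) (A : Matrix (Fin l) (Fin l) ℂ) (h : A.rank ≤ r) :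
    ∃ (X : Matrix (Fin l) (Fin r) ℂ) (Y : Matrix (Fin r) (Fin l) ℂ),
      A = X * Y ∧ ‖matL _ _ X‖ ≤ Real.sqrt r ∧ ‖matL _ _ Y‖ ≤ ‖matL _ _ A‖ := by
  classical
  set ψ : (Fin l → ℂ) ≃ₗ[ℂ] EuclideanSpace ℂ (Fin l) := (WithLp.linearEquiv 2 ℂ _).symm with hψ
  set V : Submodule ℂ (EuclideanSpace ℂ (Fin l)) :=
    (LinearMap.range A.mulVecLin).map ψ.toLinearMap with hV
  have hsr : Module.finrank ℂ V ≤ r := by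
    have : Module.finrank ℂ V = A.rank := by
      rw [hV]
      rw [LinearEquiv.finrank_map_eq ψ]
      rfl
    omega
  set b := stdOrthonormalBasis ℂ V with hb
  have colmem : ∀ j, ψ (A *ᵥ Pi.single j 1) ∈ V :=
    fun j => ⟨A *ᵥ Pi.single j 1, ⟨Pi.single j 1, rfl⟩, rfl⟩
  set c : Fin l → V := fun j => ⟨ψ (A *ᵥ Pi.single j 1), colmem j⟩ with hc
  have hcij : ∀ i j, ((c j : EuclideanSpace ℂ (Fin l)) i) = A i j := by
    intro i j
    simp [hc, hψ, Matrix.mulVec_single]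
  set s := Module.finrank ℂ V
  refine ⟨(fun i k => if h : (k : ℕ) < s then ((b ⟨k, h⟩ : V) : EuclideanSpace ℂ (Fin l)) i else 0),
    (fun k j => if h : (k : ℕ) < s then b.repr (c j) ⟨k, h⟩ else 0), ?_, ?_, ?_⟩
  · ext i j
    show A i j = ∑ k : Fin r, (if h : (k : ℕ) < s then ((b ⟨k, h⟩ : V) : EuclideanSpace ℂ (Fin l)) i else 0) *
      (if h : (k : ℕ) < s then b.repr (c j) ⟨k, h⟩ else 0)
    have hterm : ∀ k : Fin r,
        (if h : (k : ℕ) < s then ((b ⟨k, h⟩ : V) : EuclideanSpace ℂ (Fin l)) i else 0) *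
        (if h : (k : ℕ) < s then b.repr (c j) ⟨k, h⟩ else 0)
        = if h : (k : ℕ) < s then
            b.repr (c j) ⟨k, h⟩ * ((b ⟨k, h⟩ : V) : EuclideanSpace ℂ (Fin l)) i else 0 := by
      intro k
      by_cases h : (k : ℕ) < s <;> simp [h, mul_comm]
    rw [Finset.sum_congr rfl fun k _ => hterm k, sum_fin_pad hsr (fun m => b.repr (c j) m * ((b m : V) : EuclideanSpace ℂ (Fin l)) i)]
    have hrepr := b.sum_repr (c j)
    set L : V →ₗ[ℂ] ℂ :=
      ((EuclideanSpace.proj i : EuclideanSpace ℂ (Fin l) →L[ℂ] ℂ) : EuclideanSpace ℂ (Fin l) →ₗ[ℂ] ℂ).comp V.subtype with hLdef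
    have h2 := congrArg L hrepr
    rw [map_sum] at h2
    simp only [_root_.map_smul, smul_eq_mul] at h2
    have hLb : ∀ v : V, L v = (v : EuclideanSpace ℂ (Fin l)) i := fun v => rfl
    have h3 : A i j = L (c j) := by rw [hLb, hcij]
    rw [h3, ← h2]
    rfl
  · have hsq : ‖matL (Fin l) (Fin r)
        (fun i k => if h : (k : ℕ) < s then ((b ⟨k, h⟩ : V) : EuclideanSpace ℂ (Fin l)) i else 0)‖ ^ 2
        = (s : ℝ) := by
      erw [norm_matL_sq, Finset.sum_comm]
      have : ∀ k : Fin r, (∑ i, ‖(if h : (k : ℕ) < s then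
          ((b ⟨k, h⟩ : V) : EuclideanSpace ℂ (Fin l)) i else 0)‖ ^ 2)
          = if h : (k : ℕ) < s then
              (∑ i, ‖((b ⟨k, h⟩ : V) : EuclideanSpace ℂ (Fin l)) i‖ ^ 2) else 0 := by
        intro k
        by_cases h : (k : ℕ) < s <;> simp [h]
      rw [Finset.sum_congr rfl fun k _ => this k, sum_fin_pad hsr (fun m => (∑ i, ‖((b m : V) : EuclideanSpace ℂ (Fin l)) i‖ ^ 2))]
      have hone : ∀ m : Fin s,
          (∑ i, ‖((b m : V) : EuclideanSpace ℂ (Fin l)) i‖ ^ 2) = 1 := by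
        intro m
        rw [← norm_sq_eucl]
        have : ‖((b m : V) : EuclideanSpace ℂ (Fin l))‖ = ‖b m‖ := rfl
        rw [this, b.orthonormal.1 m, one_pow]
      rw [Finset.sum_congr rfl fun m _ => hone m]
      simp
    have h1 : (0:ℝ) ≤ Real.sqrt r := Real.sqrt_nonneg _
    nlinarith [Real.sq_sqrt (show (0:ℝ) ≤ r by positivity), norm_nonneg
      (matL (Fin l) (Fin r) (fun i k => if h : (k : ℕ) < s then
        ((b ⟨k, h⟩ : V) : EuclideanSpace ℂ (Fin l)) i else 0)), (Nat.cast_le.mpr hsr : (s:ℝ) ≤ r)]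
  · have hsq : ‖matL (Fin r) (Fin l)
        (fun k j => if h : (k : ℕ) < s then b.repr (c j) ⟨k, h⟩ else 0)‖ ^ 2
        = ‖matL (Fin l) (Fin l) A‖ ^ 2 := by
      erw [norm_matL_sq, norm_matL_sq]
      conv_lhs => rw [Finset.sum_comm]
      refine Eq.trans (Finset.sum_congr rfl fun j _ => ?_) Finset.sum_comm
      have : ∀ k : Fin r, ‖(if h : (k : ℕ) < s then b.repr (c j) ⟨k, h⟩ else 0)‖ ^ 2
          = if h : (k : ℕ) < s then ‖b.repr (c j) ⟨k, h⟩‖ ^ 2 else 0 := by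
        intro k
        by_cases h : (k : ℕ) < s <;> simp [h]
      rw [Finset.sum_congr rfl fun k _ => this k,
        sum_fin_pad hsr (fun m => ‖b.repr (c j) m‖ ^ 2), ← norm_sq_eucl]
      rw [show ∀ x : V, ‖b.repr x‖ = ‖x‖ from fun x => b.repr.norm_map x]
      have : ‖c j‖ = ‖((c j : V) : EuclideanSpace ℂ (Fin l))‖ := rfl
      rw [this, norm_sq_eucl]
      exact Finset.sum_congr rfl fun i _ => by rw [hcij i j]
    nlinarith [norm_nonneg (matL (Fin r) (Fin l)
        (fun k j => if h : (k : ℕ) < s then b.repr (c j) ⟨k, h⟩ else 0)),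
      norm_nonneg (matL (Fin l) (Fin l) A)]

lemma continuous_matL : Continuous (fun A : Matrix m n ℂ => matL m n A) := by
  have : (fun A : Matrix m n ℂ => matL m n A)
      = (EuclideanSpace.equiv (m × n) ℂ).symm ∘ (fun (A : Matrix m n ℂ) p => A p.1 p.2) := rfl
  rw [this]
  exact (ContinuousLinearEquiv.continuous _).comp
    (continuous_pi fun p => (continuous_apply p.2).comp (continuous_apply p.1))

lemma continuous_matL_symm :
    Continuous (fun x : EuclideanSpace ℂ (m × n) => (matL m n).symm x) := by
  refine continuous_pi fun i => continuous_pi fun j => ?_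
  exact (continuous_apply (i, j)).comp (EuclideanSpace.equiv (m × n) ℂ).continuous

lemma rank_smul_eq {l : ℕ} (c : ℂ) (hc : c ≠ 0) (A : Matrix (Fin l) (Fin l) ℂ) :
    (c • A).rank = A.rank := by
  have h1 : c • A = (c • (1 : Matrix (Fin l) (Fin l) ℂ)) * A := by
    rw [Matrix.smul_mul, one_mul]
  have h2 : IsUnit ((c • (1 : Matrix (Fin l) (Fin l) ℂ)).det) := by
    rw [Matrix.det_smul, Matrix.det_one, mul_one]
    exact (pow_ne_zero _ hc).isUnit
  rw [h1, Matrix.rank_mul_eq_right_of_isUnit_det _ _ h2]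

lemma frob_pos {n l : ℕ} {A : Matrix (Fin n) (Fin l) ℂ} (hA : A ≠ 0) : 0 < frobC A := by
  rw [frobC_eq]
  exact norm_pos_iff.mpr (fun h => hA ((matL (Fin n) (Fin l)).map_eq_zero_iff.mp h))

lemma norm_matL_inv_smul {n l : ℕ} {B : Matrix (Fin n) (Fin l) ℂ} (hB : B ≠ 0) :
    ‖matL (Fin n) (Fin l) ((((frobC B)⁻¹ : ℝ) : ℂ) • B)‖ = 1 := by
  rw [_root_.map_smul, norm_smul, Complex.norm_real, Real.norm_eq_abs,
    abs_of_nonneg (inv_nonneg.mpr (le_of_lt (frob_pos hB))), ← frobC_eq]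
  exact inv_mul_cancel₀ (ne_of_gt (frob_pos hB))

/-- The multiplication map into Euclidean space. -/
noncomputable def gmap (l r : ℕ)
    (p : EuclideanSpace ℂ (Fin l × Fin r) × EuclideanSpace ℂ (Fin r × Fin l)) :
    EuclideanSpace ℂ (Fin l × Fin l) :=
  matL _ _ ((matL (Fin l) (Fin r)).symm p.1 * (matL (Fin r) (Fin l)).symm p.2)

lemma continuous_gmap (l r : ℕ) : Continuous (gmap l r) :=
  continuous_matL.comp ((continuous_matL_symm.comp continuous_fst).matrix_mul
    (continuous_matL_symm.comp continuous_snd))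

lemma normpt (l r : ℕ) (A' : Matrix (Fin l) (Fin l) ℂ) (hA' : A' ≠ 0) (hr : A'.rank ≤ r) :
    ∃ q : EuclideanSpace ℂ (Fin l × Fin r) × EuclideanSpace ℂ (Fin r × Fin l),
      ‖q.1‖ ≤ Real.sqrt r ∧ ‖q.2‖ ≤ 1 ∧
      gmap l r q = matL _ _ ((((frobC A')⁻¹ : ℝ) : ℂ) • A') := by
  set α : ℂ := (((frobC A')⁻¹ : ℝ) : ℂ) with hαdef
  have hα : α ≠ 0 := by
    simp only [hαdef, ne_eq, Complex.ofReal_eq_zero]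
    exact inv_ne_zero (ne_of_gt (frob_pos hA'))
  have hrank : (α • A').rank ≤ r := by rw [rank_smul_eq α hα]; exact hr
  obtain ⟨X, Y, hXY, hX, hY⟩ := factor r (α • A') hrank
  refine ⟨(matL _ _ X, matL _ _ Y), hX, ?_, ?_⟩
  · exact le_trans hY (le_of_eq (norm_matL_inv_smul hA'))
  · simp only [gmap, LinearEquiv.symm_apply_apply]
    rw [← hXY]

end Stmt15Aux

open Stmt15Aux in
/-- Lemma: if `W` is a subspace of `ℂ^{ℓ×ℓ}` meeting the rank-`≤ r` matrices only in `0`,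
then there is a constant `D < 1` with `|⟨A,B⟩| ≤ D‖A‖‖B‖` for all `A` of rank `≤ r` and `B ∈ W`. -/
theorem stmt15 (l r : ℕ) (hl : 1 ≤ l) (hr : r ≤ l)
    (W : Submodule ℂ (Matrix (Fin l) (Fin l) ℂ))
    (hW : (W : Set (Matrix (Fin l) (Fin l) ℂ)) ∩ {M | M.rank ≤ r} = {0}) :
    ∃ D : ℝ, D < 1 ∧
      ∀ A : Matrix (Fin l) (Fin l) ℂ, A.rank ≤ r → ∀ B ∈ W,
        ‖Matrix.trace (A * Bᴴ)‖ ≤ D * frobC A * frobC B := by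
  classical
  have hfrob0 : frobC (0 : Matrix (Fin l) (Fin l) ℂ) = 0 := by
    rw [frobC_eq, map_zero, norm_zero]
  by_cases hA0 : ∃ A : Matrix (Fin l) (Fin l) ℂ, A ≠ 0 ∧ A.rank ≤ r
  swap
  · refine ⟨0, by norm_num, ?_⟩
    intro A hAr B hB
    have hA : A = 0 := by
      by_contra h
      exact hA0 ⟨A, h, hAr⟩
    subst hA
    simp [hfrob0]
  by_cases hB0 : ∃ B ∈ W, B ≠ 0
  swap
  · refine ⟨0, by norm_num, ?_⟩
    intro A hAr B hBW
    have hB : B = 0 := by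
      by_contra h
      exact hB0 ⟨B, hBW, h⟩
    subst hB
    simp [hfrob0]
  obtain ⟨A₁, hA₁, hA₁r⟩ := hA0
  obtain ⟨B₁, hB₁W, hB₁⟩ := hB0
  set g := gmap l r with hg
  set W' : Submodule ℂ (EuclideanSpace ℂ (Fin l × Fin l)) :=
    W.map (matL (Fin l) (Fin l)).toLinearMap with hW'
  set S : Set ((EuclideanSpace ℂ (Fin l × Fin r) × EuclideanSpace ℂ (Fin r × Fin l)) ×
      EuclideanSpace ℂ (Fin l × Fin l)) :=
    ((Metric.closedBall 0 (Real.sqrt r) ×ˢ Metric.closedBall 0 1) ×ˢ Metric.sphere 0 1) ∩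
      {p | ‖g p.1‖ = 1 ∧ p.2 ∈ W'} with hS
  have hScompact : IsCompact S :=
    IsCompact.inter_right
      (((isCompact_closedBall _ _).prod (isCompact_closedBall _ _)).prod (isCompact_sphere _ _))
      (IsClosed.inter (isClosed_eq ((continuous_gmap l r).comp continuous_fst).norm
          continuous_const)
        ((Submodule.closed_of_finiteDimensional W').preimage continuous_snd))
  set f : ((EuclideanSpace ℂ (Fin l × Fin r) × EuclideanSpace ℂ (Fin r × Fin l)) ×
      EuclideanSpace ℂ (Fin l × Fin l)) → ℝ :=
    fun p => ‖(inner ℂ p.2 (g p.1) : ℂ)‖ with hfdef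
  have hf : Continuous f :=
    (continuous_inner.comp (continuous_snd.prodMk
      ((continuous_gmap l r).comp continuous_fst))).norm
  have hmem : ∀ (A' B' : Matrix (Fin l) (Fin l) ℂ), A' ≠ 0 → A'.rank ≤ r → B' ∈ W → B' ≠ 0 →
      ∃ p ∈ S, f p = (frobC A')⁻¹ * ((frobC B')⁻¹ * ‖(A' * B'ᴴ).trace‖) := by
    intro A' B' hA' hr' hBW' hB'
    obtain ⟨q, hq1, hq2, hq3⟩ := normpt l r A' hA' hr'
    set β : ℂ := (((frobC B')⁻¹ : ℝ) : ℂ) with hβdef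
    have hbnorm : ‖matL (Fin l) (Fin l) (β • B')‖ = 1 := norm_matL_inv_smul hB'
    refine ⟨(q, matL _ _ (β • B')), ⟨Set.mem_prod.mpr ⟨Set.mem_prod.mpr
      ⟨mem_closedBall_zero_iff.mpr hq1, mem_closedBall_zero_iff.mpr hq2⟩,
      mem_sphere_zero_iff_norm.mpr hbnorm⟩, ?_, ?_⟩, ?_⟩
    · show ‖g q‖ = 1
      rw [hg, hq3]
      exact norm_matL_inv_smul hA'
    · show matL _ _ (β • B') ∈ W'
      exact Submodule.mem_map_of_mem (W.smul_mem β hBW')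
    · show ‖(inner ℂ (matL (Fin l) (Fin l) (β • B')) (g q) : ℂ)‖ = _
      rw [hg, hq3, _root_.map_smul, _root_.map_smul, inner_smul_left, inner_smul_right, inner_matL]
      rw [norm_mul, norm_mul, RCLike.norm_conj, hβdef]
      rw [Complex.norm_real, Complex.norm_real, Real.norm_eq_abs, Real.norm_eq_abs,
        abs_of_nonneg (inv_nonneg.mpr (frob_pos hB').le),
        abs_of_nonneg (inv_nonneg.mpr (frob_pos hA').le)]
      ring
  obtain ⟨p₁, hp₁S, _⟩ := hmem A₁ B₁ hA₁ hA₁r hB₁W hB₁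
  obtain ⟨p₀, hp₀S, hp₀max⟩ := hScompact.exists_isMaxOn ⟨p₁, hp₁S⟩ hf.continuousOn
  refine ⟨f p₀, ?_, ?_⟩
  · by_contra hge
    push_neg at hge
    have hb1 : ‖p₀.2‖ = 1 := mem_sphere_zero_iff_norm.mp (Set.mem_prod.mp hp₀S.1).2
    have ha1 : ‖g p₀.1‖ = 1 := hp₀S.2.1
    have hb0 : p₀.2 ≠ 0 := fun h => by rw [h, norm_zero] at hb1; norm_num at hb1
    have ha0 : g p₀.1 ≠ 0 := fun h => by rw [h, norm_zero] at ha1; norm_num at ha1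
    have hCS : ‖(inner ℂ p₀.2 (g p₀.1) : ℂ)‖ ≤ ‖p₀.2‖ * ‖g p₀.1‖ := norm_inner_le_norm _ _
    have heq : ‖(inner ℂ p₀.2 (g p₀.1) : ℂ)‖ = ‖p₀.2‖ * ‖g p₀.1‖ := by
      refine le_antisymm hCS ?_
      rw [hb1, ha1, mul_one]
      exact hge
    obtain ⟨c, hc0, hca⟩ := (norm_inner_eq_norm_iff hb0 ha0).mp heq
    set B₀ : Matrix (Fin l) (Fin l) ℂ := (matL (Fin l) (Fin l)).symm p₀.2 with hB₀
    have hB₀W : B₀ ∈ W := by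
      obtain ⟨w, hwW, hweq⟩ := Submodule.mem_map.mp hp₀S.2.2
      rw [hB₀, ← hweq, LinearEquiv.coe_coe, LinearEquiv.symm_apply_apply]
      exact hwW
    have hrankA₀ : ((matL (Fin l) (Fin l)).symm (g p₀.1)).rank ≤ r := by
      have : (matL (Fin l) (Fin l)).symm (g p₀.1)
          = (matL (Fin l) (Fin r)).symm p₀.1.1 * (matL (Fin r) (Fin l)).symm p₀.1.2 := by
        rw [hg]
        simp only [gmap, LinearEquiv.symm_apply_apply]
      rw [this]
      refine le_trans (Matrix.rank_mul_le_left _ _) (le_trans (Matrix.rank_le_card_width _) ?_)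
      simp
    have hA₀B₀ : (matL (Fin l) (Fin l)).symm (g p₀.1) = c • B₀ := by
      rw [hca, _root_.map_smul]
    have hB₀r : B₀.rank ≤ r := by
      have hB₀eq : B₀ = c⁻¹ • ((matL (Fin l) (Fin l)).symm (g p₀.1)) := by
        rw [hA₀B₀, smul_smul, inv_mul_cancel₀ hc0, one_smul]
      rw [hB₀eq, rank_smul_eq _ (inv_ne_zero hc0)]
      exact hrankA₀
    have hmemint : B₀ ∈ (W : Set (Matrix (Fin l) (Fin l) ℂ)) ∩ {M | M.rank ≤ r} := ⟨hB₀W, hB₀r⟩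
    rw [hW] at hmemint
    have hB₀0 : B₀ = 0 := hmemint
    have : p₀.2 = 0 := by
      have := congrArg (matL (Fin l) (Fin l)) hB₀0
      rwa [hB₀, LinearEquiv.apply_symm_apply, map_zero] at this
    exact hb0 this
  · intro A hAr B hBW
    rcases eq_or_ne A 0 with rfl | hA
    · simp [hfrob0]
    rcases eq_or_ne B 0 with rfl | hB
    · simp [hfrob0]
    obtain ⟨p, hpS, hpval⟩ := hmem A B hA hAr hBW hB
    have hle : (frobC A)⁻¹ * ((frobC B)⁻¹ * ‖(A * Bᴴ).trace‖) ≤ f p₀ :=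
      le_trans hpval.symm.le (hp₀max hpS)
    have hApos : 0 < frobC A := frob_pos hA
    have hBpos : 0 < frobC B := frob_pos hB
    calc ‖(A * Bᴴ).trace‖
        = (frobC A * frobC B) *
            ((frobC A)⁻¹ * ((frobC B)⁻¹ * ‖(A * Bᴴ).trace‖)) := by
          field_simp
      _ ≤ (frobC A * frobC B) * f p₀ := by
          exact mul_le_mul_of_nonneg_left hle (by positivity)
      _ = f p₀ * frobC A * frobC B := by ring
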